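/- The Green function G satisfies: G ≥ 0 on ℂ², G(f_λ(z), λ) = 2·G(z,λ) for all (z,λ) ∈ ℂ², and 𝒦 = {(z,λ) ∈ ℂ² : G(z,λ) = 0}. -/

import Mathlib

/-- `log⁺ t = log (max t 1)`. -/
noncomputable def logPlus (t : ℝ) : ℝ := Real.log (max t 1)

/-- `𝒦 = {(z,λ) : the orbit of z under f_λ is bounded}`. -/
def bigK : Set (ℂ × ℂ) :=
  {p | ∃ M : ℝ, ∀ n : ℕ, ‖(fun z => z ^ 2 + p.2)^[n] p.1‖ ≤ M}

lemma logPlus_nonneg (t : ℝ) : 0 ≤ logPlus t :=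
  Real.log_nonneg (le_max_right _ _)

lemma logPlus_mono {s t : ℝ} (h : s ≤ t) : logPlus s ≤ logPlus t :=
  Real.log_le_log (lt_of_lt_of_le one_pos (le_max_right s 1)) (max_le_max h le_rfl)

lemma abs_sq_lower (a b : ℂ) :
    (‖a‖) ^ 2 - ‖b‖ ≤ ‖a ^ 2 + b‖ := by
  have h1 : ‖a ^ 2‖ ≤ ‖a ^ 2 + b‖ + ‖b‖ := by
    calc ‖a ^ 2‖ = ‖(a ^ 2 + b) + (-b)‖ := by ring_nf
    _ ≤ ‖a ^ 2 + b‖ + ‖-b‖ := norm_add_le _ _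
    _ = ‖a ^ 2 + b‖ + ‖b‖ := by rw [norm_neg]
  rw [norm_pow] at h1
  linarith

theorem stmt2 (G : ℂ × ℂ → ℝ)
    (hG : ∀ p : ℂ × ℂ, Filter.Tendsto
      (fun n : ℕ => (2 : ℝ)⁻¹ ^ n * logPlus (‖(fun z => z ^ 2 + p.2)^[n] p.1‖))
      Filter.atTop (nhds (G p))) :
    (∀ p : ℂ × ℂ, 0 ≤ G p) ∧
    (∀ z lam : ℂ, G (z ^ 2 + lam, lam) = 2 * G (z, lam)) ∧
    bigK = {p : ℂ × ℂ | G p = 0} := by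
  have hnonneg : ∀ p : ℂ × ℂ, 0 ≤ G p := fun p =>
    ge_of_tendsto' (hG p) (fun n => mul_nonneg (by positivity) (logPlus_nonneg _))
  have hfun : ∀ z lam : ℂ, G (z ^ 2 + lam, lam) = 2 * G (z, lam) := by
    intro z lam
    have h3 : Filter.Tendsto
        (fun n : ℕ => 2 * ((2 : ℝ)⁻¹ ^ (n + 1) *
          logPlus (‖(fun w => w ^ 2 + lam)^[n + 1] z‖)))
        Filter.atTop (nhds (2 * G (z, lam))) :=
      ((hG (z, lam)).comp (Filter.tendsto_add_atTop_nat 1)).const_mul 2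
    have h2 : Filter.Tendsto
        (fun n : ℕ => (2 : ℝ)⁻¹ ^ n *
          logPlus (‖(fun w => w ^ 2 + lam)^[n] (z ^ 2 + lam)‖))
        Filter.atTop (nhds (2 * G (z, lam))) := by
      refine h3.congr fun n => ?_
      rw [Function.iterate_succ_apply, pow_succ]
      ring
    exact tendsto_nhds_unique (hG (z ^ 2 + lam, lam)) h2
  refine ⟨hnonneg, hfun, ?_⟩
  -- iterated functional equation
  have hiter : ∀ (k : ℕ) (z lam : ℂ),
      G ((fun w => w ^ 2 + lam)^[k] z, lam) = 2 ^ k * G (z, lam) := by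
    intro k z lam
    induction k with
    | zero => simp
    | succ k ih =>
      rw [Function.iterate_succ_apply']
      have := hfun ((fun w => w ^ 2 + lam)^[k] z) lam
      rw [this, ih, pow_succ]
      ring
  ext p
  simp only [Set.mem_setOf_eq]
  constructor
  · rintro ⟨M, hM⟩
    have hle : G p ≤ 0 := by
      have hlim : Filter.Tendsto (fun n : ℕ => (2 : ℝ)⁻¹ ^ n * logPlus M)
          Filter.atTop (nhds 0) := by
        simpa using (tendsto_pow_atTop_nhds_zero_of_lt_one (by norm_num : (0:ℝ) ≤ 2⁻¹)
          (by norm_num : (2:ℝ)⁻¹ < 1)).mul_const (logPlus M)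
      refine le_of_tendsto_of_tendsto' (hG p) hlim fun n => ?_
      exact mul_le_mul_of_nonneg_left (logPlus_mono (hM n)) (by positivity)
    exact le_antisymm hle (hnonneg p)
  · intro hGp
    by_contra hK
    obtain ⟨z, lam⟩ := p
    simp only [bigK, Set.mem_setOf_eq, not_exists, not_forall, not_le] at hK
    set R : ℝ := max 4 (2 * ‖lam‖) with hR
    obtain ⟨n, hn⟩ := hK R
    set w : ℂ := (fun z => z ^ 2 + lam)^[n] z with hw
    -- key growth estimate
    have key : ∀ m : ℕ, R ≤ ‖(fun z => z ^ 2 + lam)^[m] w‖ ∧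
        2 ^ m * Real.log 2 ≤ Real.log (‖(fun z => z ^ 2 + lam)^[m] w‖ / 2) := by
      intro m
      induction m with
      | zero =>
        refine ⟨le_of_lt hn, ?_⟩
        have h4 : (4 : ℝ) ≤ ‖w‖ := le_trans (le_max_left _ _) (le_of_lt hn)
        have : (2 : ℝ) ≤ ‖w‖ / 2 := by linarith
        simpa using Real.log_le_log (by norm_num) this
      | succ m ih =>
        obtain ⟨h1, h2⟩ := ih
        set c : ℝ := ‖(fun z => z ^ 2 + lam)^[m] w‖ with hc
        have h4 : (4 : ℝ) ≤ c := le_trans (le_max_left _ _) h1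
        have hlam : ‖lam‖ ≤ c / 2 := by
          have := le_trans (le_max_right _ _) h1
          linarith
        have hstep : c ^ 2 / 2 ≤ ‖(fun z => z ^ 2 + lam)^[m + 1] w‖ := by
          rw [Function.iterate_succ_apply']
          have := abs_sq_lower ((fun z => z ^ 2 + lam)^[m] w) lam
          rw [← hc] at this
          nlinarith
        set c' : ℝ := ‖(fun z => z ^ 2 + lam)^[m + 1] w‖ with hc'
        have hRc : R ≤ c' := by
          have : 2 * c ≤ c ^ 2 / 2 := by nlinarith
          have hc2 : 2 * c ≤ c' := le_trans this hstep
          calc R ≤ c := h1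
          _ ≤ 2 * c := by linarith
          _ ≤ c' := hc2
        refine ⟨hRc, ?_⟩
        have hlog : Real.log (c ^ 2 / 4) ≤ Real.log (c' / 2) := by
          apply Real.log_le_log (by positivity)
          linarith [hstep]
        have heq : Real.log (c ^ 2 / 4) = 2 * Real.log (c / 2) := by
          rw [show c ^ 2 / 4 = (c / 2) ^ 2 by ring, Real.log_pow]
          push_cast; ring
        rw [heq] at hlog
        calc 2 ^ (m + 1) * Real.log 2 = 2 * (2 ^ m * Real.log 2) := by ring
        _ ≤ 2 * Real.log (c / 2) := by linarith
        _ ≤ Real.log (c' / 2) := hlog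
    -- hence G (w, lam) ≥ log 2 > 0
    have hGw : Real.log 2 ≤ G (w, lam) := by
      apply ge_of_tendsto' (hG (w, lam))
      intro m
      obtain ⟨h1, h2⟩ := key m
      set c : ℝ := ‖(fun z => z ^ 2 + lam)^[m] w‖ with hc
      have h4 : (4 : ℝ) ≤ c := le_trans (le_max_left _ _) h1
      have hlp : Real.log (c / 2) ≤ logPlus c := by
        unfold logPlus
        apply Real.log_le_log (by positivity)
        calc c / 2 ≤ c := by linarith
        _ ≤ max c 1 := le_max_left _ _
      have hpow : (0:ℝ) < (2:ℝ)⁻¹ ^ m := by positivity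
      have : 2 ^ m * Real.log 2 ≤ logPlus c := le_trans h2 hlp
      calc Real.log 2 = (2:ℝ)⁻¹ ^ m * (2 ^ m * Real.log 2) := by
            rw [← mul_assoc, ← mul_pow]
            norm_num
      _ ≤ (2:ℝ)⁻¹ ^ m * logPlus c := by
            exact mul_le_mul_of_nonneg_left this (le_of_lt hpow)
    have hGwz : G (w, lam) = 2 ^ n * G (z, lam) := hiter n z lam
    rw [hGwz, show G (z, lam) = 0 from hGp] at hGw
    have : (0:ℝ) < Real.log 2 := Real.log_pos (by norm_num)
    linarith
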